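/- Let R be a subring of the field ℚ̄ of algebraic numbers containing an invertible element α that is not a root of unity. Then for every natural number n ≥ 1 and every nonzero ideal I of R, there exist infinitely many units x of R such that x^n - 1 ∈ I. -/

import Mathlib

open Polynomial


private theorem ST2.prime_case (p : ℕ) (hp : p.Prime) (f : ℤ[X]) (hf : f.IsPrimitive) :
    Finite (ℤ[X] ⧸ (Ideal.span {C (p:ℤ), f})) := by
  haveI : Fact p.Prime := ⟨hp⟩
  set F := ZMod p
  set fb : F[X] := f.map (Int.castRingHom F) with hfb
  have hfbne : fb ≠ 0 := by
    intro h0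
    have hdvd : (C (p:ℤ)) ∣ f := by
      rw [C_dvd_iff_dvd_coeff]
      intro i
      have h1 : (f.coeff i : F) = 0 := by
        have := congrArg (fun q => Polynomial.coeff q i) h0
        simpa [hfb, coeff_map] using this
      exact_mod_cast (ZMod.intCast_zmod_eq_zero_iff_dvd _ _).mp h1
    have h2 := hf _ hdvd
    rw [Int.isUnit_iff] at h2
    have h3 : (0:ℤ) ≤ (p:ℤ) := Int.natCast_nonneg p
    have h4 : (1:ℤ) < (p:ℤ) := by exact_mod_cast hp.one_lt
    omega
  -- AdjoinRoot fb is finite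
  haveI : Module.Finite F (AdjoinRoot fb) := PowerBasis.finite (AdjoinRoot.powerBasis hfbne)
  haveI : Finite (AdjoinRoot fb) := Module.finite_of_finite F
  -- ring hom ℤ[X] → AdjoinRoot fb
  set ψ : ℤ[X] →+* AdjoinRoot fb :=
    (AdjoinRoot.mk fb).comp (Polynomial.mapRingHom (Int.castRingHom F)) with hψ
  have hp0 : ((p:ℕ) : AdjoinRoot fb) = 0 := by
    rw [← map_natCast (algebraMap F (AdjoinRoot fb)) p, ZMod.natCast_self, map_zero]
  have hker : ∀ g : ℤ[X], g ∈ Ideal.span {C (p:ℤ), f} → ψ g = 0 := by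
    intro g hg
    rw [Ideal.mem_span_pair] at hg
    obtain ⟨u, v, huv⟩ := hg
    have h1 : ψ (C (p:ℤ)) = 0 := by
      simp [hψ, Polynomial.map_C, Int.cast_natCast, ZMod.natCast_self, hp0]
    have h2 : ψ f = 0 := by
      simp [hψ, AdjoinRoot.mk_self, ← hfb]
    rw [← huv, map_add, map_mul, map_mul, h1, h2, mul_zero, mul_zero, add_zero]
  set Φ := Ideal.Quotient.lift (Ideal.span {C (p:ℤ), f}) ψ hker with hΦ
  have hinj : Function.Injective Φ := by
    rw [injective_iff_map_eq_zero]
    intro x hx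
    obtain ⟨g, rfl⟩ := Ideal.Quotient.mk_surjective x
    rw [hΦ, Ideal.Quotient.lift_mk] at hx
    -- ψ g = 0 → g ∈ span
    rw [Ideal.Quotient.eq_zero_iff_mem]
    have hmk : AdjoinRoot.mk fb (g.map (Int.castRingHom F)) = 0 := by simpa [hψ] using hx
    obtain ⟨hb, hhb⟩ := (AdjoinRoot.mk_eq_zero).mp hmk
    obtain ⟨h, rfl⟩ := Polynomial.map_surjective (Int.castRingHom F) ZMod.intCast_surjective hb
    have hmod : (g - f * h).map (Int.castRingHom F) = 0 := by
      rw [Polynomial.map_sub, Polynomial.map_mul, ← hfb, hhb, sub_self]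
    have hdvd : C (p:ℤ) ∣ g - f * h := by
      rw [C_dvd_iff_dvd_coeff]
      intro i
      have h1 : ((g - f*h).coeff i : F) = 0 := by
        have hc := congrArg (fun q => Polynomial.coeff q i) hmod
        simpa [← Polynomial.map_mul, Polynomial.coeff_map] using hc
      exact_mod_cast (ZMod.intCast_zmod_eq_zero_iff_dvd _ _).mp h1
    obtain ⟨w, hw⟩ := hdvd
    rw [Ideal.mem_span_pair]
    exact ⟨w, h, by linear_combination -hw⟩
  exact Finite.of_injective Φ hinj



private theorem ST2.fin_quot (N : ℕ) (hN : 1 ≤ N) (f : ℤ[X]) (hf : f.IsPrimitive) :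
    Finite (ℤ[X] ⧸ (Ideal.span {C (N:ℤ), f})) := by
  induction N using Nat.strong_induction_on with
  | _ N ih =>
  rcases eq_or_lt_of_le hN with h1 | h2
  · -- N = 1
    have : (Ideal.span {C ((N:ℤ)), f}) = ⊤ := by
      rw [Ideal.eq_top_iff_one]
      have : (1:ℤ[X]) = C ((N:ℤ)) := by rw [← h1]; simp
      rw [this]
      exact Ideal.subset_span (by simp)
    haveI : Subsingleton (ℤ[X] ⧸ (Ideal.span {C ((N:ℤ)), f})) := by
      rw [this]
      infer_instance
    exact Finite.of_subsingleton
  · -- N ≥ 2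
    set p := N.minFac with hpdef
    have hNne1 : N ≠ 1 := by omega
    have hp : p.Prime := Nat.minFac_prime hNne1
    set M := N / p with hMdef
    have hpdvd : p ∣ N := Nat.minFac_dvd N
    have hNM : N = p * M := (Nat.div_mul_cancel hpdvd).symm.trans (by ring)
    have hM1 : 1 ≤ M := Nat.div_pos (Nat.minFac_le (by omega)) hp.pos
    have hMlt : M < N := by
      have := hp.two_le
      calc M = N / p := rfl
      _ < N := Nat.div_lt_self (by omega) (by omega)
    set J : Ideal ℤ[X] := Ideal.span {C ((N:ℤ)), f} with hJ
    set Jp : Ideal ℤ[X] := Ideal.span {C ((p:ℤ)), f} with hJp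
    set JM : Ideal ℤ[X] := Ideal.span {C ((M:ℤ)), f} with hJM
    haveI hFBp : Finite (ℤ[X] ⧸ Jp) := ST2.prime_case p hp f hf
    haveI hFBM : Finite (ℤ[X] ⧸ JM) := ih M hMlt hM1
    have hle : J ≤ Jp := by
      rw [hJ, Ideal.span_le]
      intro x hx
      simp only [Set.mem_insert_iff, Set.mem_singleton_iff] at hx
      rcases hx with rfl | rfl
      · have : C ((N:ℤ)) = C ((p:ℤ)) * C ((M:ℤ)) := by
          rw [← C_mul]; congr 1; exact_mod_cast hNM
        rw [this]
        exact Ideal.mul_mem_right _ _ (Ideal.subset_span (by simp))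
      · exact Ideal.subset_span (by simp)
    set q : ℤ[X] ⧸ J →+* ℤ[X] ⧸ Jp := Ideal.Quotient.factor hle with hq
    have hqsurj : Function.Surjective q := by
      intro y
      obtain ⟨g, rfl⟩ := Ideal.Quotient.mk_surjective y
      exact ⟨Ideal.Quotient.mk J g, rfl⟩
    set T : ℤ[X] →ₗ[ℤ[X]] (ℤ[X] ⧸ J) :=
      (J.mkQ).comp (LinearMap.mulLeft ℤ[X] (C ((p:ℤ)))) with hT
    have hTker : JM ≤ LinearMap.ker T := by
      intro g hg
      rw [hJM, Ideal.mem_span_pair] at hg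
      obtain ⟨u, v, huv⟩ := hg
      rw [LinearMap.mem_ker, hT]
      simp only [LinearMap.comp_apply, LinearMap.mulLeft_apply, Submodule.mkQ_apply]
      rw [Submodule.Quotient.mk_eq_zero]
      have : C ((p:ℤ)) * g ∈ J := by
        rw [hJ, Ideal.mem_span_pair]
        refine ⟨u, C ((p:ℤ)) * v, ?_⟩
        have hC : C ((N:ℤ)) = C ((p:ℤ)) * C ((M:ℤ)) := by
          rw [← C_mul]; congr 1; exact_mod_cast hNM
        rw [hC]
        linear_combination C ((p:ℤ)) * huv
      exact this
    set t : (ℤ[X] ⧸ JM) →ₗ[ℤ[X]] (ℤ[X] ⧸ J) := Submodule.liftQ JM T hTker with ht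
    have hsurj : Function.Surjective
        (fun xy : (ℤ[X] ⧸ Jp) × (ℤ[X] ⧸ JM) =>
          Function.surjInv hqsurj xy.1 + t xy.2) := by
      intro b
      set x := q b with hx
      have hqb' : q (b - Function.surjInv hqsurj x) = 0 := by
        rw [map_sub, Function.surjInv_eq hqsurj x, hx, sub_self]
      obtain ⟨g, hg⟩ := Ideal.Quotient.mk_surjective (b - Function.surjInv hqsurj x)
      have hgJp : g ∈ Jp := by
        rw [← Ideal.Quotient.eq_zero_iff_mem (I := Jp)]
        rw [← hqb', ← hg]
        rfl
      rw [hJp, Ideal.mem_span_pair] at hgJp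
      obtain ⟨u, v, huv⟩ := hgJp
      refine ⟨(x, Submodule.Quotient.mk u), ?_⟩
      have htu : t (Submodule.Quotient.mk u) = b - Function.surjInv hqsurj x := by
        rw [ht, Submodule.liftQ_apply, hT]
        simp only [LinearMap.comp_apply, LinearMap.mulLeft_apply, Submodule.mkQ_apply]
        rw [← hg]
        show (Ideal.Quotient.mk J) (C ((p:ℤ)) * u) = Ideal.Quotient.mk J g
        rw [Ideal.Quotient.eq]
        have : C ((p:ℤ)) * u - g = (-v) * f := by linear_combination huv
        rw [this]
        exact Ideal.mul_mem_left _ _ (Ideal.subset_span (by simp))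
      show Function.surjInv hqsurj x + t (Submodule.Quotient.mk u) = b
      rw [htu]
      ring
    exact Finite.of_surjective _ hsurj


private theorem ST2.aeval_coe_zero (R : Subring (AlgebraicClosure ℚ)) (x : R) (g : ℤ[X])
    (h : aeval (x : AlgebraicClosure ℚ) g = 0) : aeval x g = 0 := by
  have h2 : ((aeval x g : R) : AlgebraicClosure ℚ) = aeval (x : AlgebraicClosure ℚ) g :=
    (Polynomial.aeval_algHom_apply (SubringClass.subtype R).toIntAlgHom x g).symm
  have : ((aeval x g : R) : AlgebraicClosure ℚ) = ((0 : R) : AlgebraicClosure ℚ) := by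
    rw [h2, h]; rfl
  exact Subtype.coe_injective this

/-- strip powers of X to get nonzero constant coefficient -/
private theorem ST2.strip {A : Type*} [CommRing A] [IsDomain A] (x : A) (hx : x ≠ 0) :
    ∀ g : ℤ[X], g ≠ 0 → aeval x g = 0 →
      ∃ h : ℤ[X], h ≠ 0 ∧ h.coeff 0 ≠ 0 ∧ aeval x h = 0 := by
  suffices H : ∀ n : ℕ, ∀ g : ℤ[X], g.natDegree = n → g ≠ 0 → aeval x g = 0 →
      ∃ h : ℤ[X], h ≠ 0 ∧ h.coeff 0 ≠ 0 ∧ aeval x h = 0 by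
    intro g hg h0
    exact H g.natDegree g rfl hg h0
  intro n
  induction n using Nat.strong_induction_on with
  | _ n ih =>
  intro g hdeg hg h0
  by_cases hc : g.coeff 0 = 0
  · have hdiv : g = X * g.divX := by
      conv_lhs => rw [← Polynomial.X_mul_divX_add g]
      rw [hc, Polynomial.C_0, add_zero]
    have hdne : g.divX ≠ 0 := by
      intro hz
      rw [hz, mul_zero] at hdiv
      exact hg hdiv
    have haev : aeval x g.divX = 0 := by
      have : aeval x g = x * aeval x g.divX := by
        conv_lhs => rw [hdiv]
        rw [map_mul, Polynomial.aeval_X]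
      rw [h0] at this
      rcases mul_eq_zero.mp this.symm with h | h
      · exact absurd h hx
      · exact h
    have hdeg : g.divX.natDegree < n := by
      have h1 : g.divX.natDegree = g.natDegree - 1 :=
        Polynomial.natDegree_divX_eq_natDegree_tsub_one
      have h2 : 1 ≤ g.natDegree := by
        by_contra hle
        push_neg at hle
        interval_cases hdeg' : g.natDegree
        · have := Polynomial.natDegree_eq_zero.mp hdeg'
          obtain ⟨c, rfl⟩ := this
          simp at hc
          rw [hc] at hg
          simp at hg
      omega
    exact ih g.divX.natDegree (by omega) g.divX rfl hdne haev
  · exact ⟨g, hg, hc, h0⟩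

/-- a nonzero ideal of a subring of the algebraic numbers contains a nonzero integer -/
private theorem ST2.exists_int_mem (R : Subring (AlgebraicClosure ℚ)) (I : Ideal R)
    (hI : I ≠ ⊥) : ∃ N : ℤ, N ≠ 0 ∧ ((N : R) ∈ I) := by
  obtain ⟨a, haI, ha0⟩ := Submodule.exists_mem_ne_zero_of_ne_bot hI
  have haQ : (a : AlgebraicClosure ℚ) ≠ 0 := fun h => ha0 (Subtype.coe_injective h)
  have halg : IsAlgebraic ℤ (a : AlgebraicClosure ℚ) :=
    (IsFractionRing.isAlgebraic_iff ℤ ℚ (AlgebraicClosure ℚ)).mpr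
      ((AlgebraicClosure.isAlgebraic ℚ).isAlgebraic _)
  obtain ⟨g0, hg0ne, hg0⟩ := halg
  have hg0R : aeval a g0 = 0 := ST2.aeval_coe_zero R a g0 hg0
  obtain ⟨g, hgne, hgc, hgR⟩ := ST2.strip a ha0 g0 hg0ne hg0R
  refine ⟨g.coeff 0, hgc, ?_⟩
  -- (coeff 0 : R) = - a * aeval a g.divX
  have hsplit : aeval a g = a * aeval a g.divX + ((g.coeff 0 : ℤ) : R) := by
    conv_lhs => rw [← Polynomial.X_mul_divX_add g]
    rw [map_add, map_mul, Polynomial.aeval_X, Polynomial.aeval_C]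
    rfl
  rw [hgR] at hsplit
  have : ((g.coeff 0 : ℤ) : R) = a * (- aeval a g.divX) := by linear_combination -hsplit
  rw [this]
  exact Ideal.mul_mem_right _ _ haI




/-- Let `R` be a subring of the algebraic numbers containing a unit `α` that is not a
root of unity. Then for every `n ≥ 1` and every nonzero ideal `I` of `R` there are
infinitely many units `x` of `R` with `x^n - 1 ∈ I`. -/
theorem stmt_2 (R : Subring (AlgebraicClosure ℚ)) (α : Rˣ)
    (hα : ∀ m : ℕ, 1 ≤ m → α ^ m ≠ 1)
    (n : ℕ) (hn : 1 ≤ n) (I : Ideal R) (hI : I ≠ ⊥) :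
    {x : Rˣ | (x : R) ^ n - 1 ∈ I}.Infinite := by
  obtain ⟨N0, hN0ne, hN0I⟩ := ST2.exists_int_mem R I hI
  set N : ℕ := N0.natAbs with hNdef
  have hN1 : 1 ≤ N := by
    have := Int.natAbs_pos.mpr hN0ne
    omega
  have hNI : ((N : ℤ) : R) ∈ I := by
    rcases Int.natAbs_eq N0 with h | h
    · rw [← h]; exact hN0I
    · have : ((N:ℤ) : R) = -((N0 : R)) := by
        rw [show (N:ℤ) = -N0 by omega]
        push_cast
        ring
      rw [this]
      exact neg_mem hN0I
  set u : R := (α : R) with hu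
  set v : R := ((α⁻¹ : Rˣ) : R) with hv
  have hvu : v * u = 1 := by
    rw [hu, hv, ← Units.val_mul, inv_mul_cancel, Units.val_one]
  -- β = u^n is algebraic; get primitive annihilating polynomial
  set β : R := u ^ n with hβ
  have hβne : β ≠ 0 := by
    intro h
    have : v ^ n * β = 1 := by
      rw [hβ, ← mul_pow, hvu, one_pow]
    rw [h, mul_zero] at this
    exact one_ne_zero this.symm
  have halg : IsAlgebraic ℤ (β : AlgebraicClosure ℚ) :=
    (IsFractionRing.isAlgebraic_iff ℤ ℚ (AlgebraicClosure ℚ)).mpr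
      ((AlgebraicClosure.isAlgebraic ℚ).isAlgebraic _)
  obtain ⟨g, hgne, hg⟩ := halg
  have hgR : aeval β g = 0 := ST2.aeval_coe_zero R β g hg
  set f : ℤ[X] := g.primPart with hf
  have hfprim : f.IsPrimitive := g.isPrimitive_primPart
  have hfR : aeval β f = 0 := Polynomial.aeval_primPart_eq_zero hgne hgR
  -- pigeonhole in the finite quotient
  haveI := ST2.fin_quot N hN1 f hfprim
  set J : Ideal ℤ[X] := Ideal.span {C ((N:ℕ):ℤ), f} with hJ
  obtain ⟨i, j, hij, hmk⟩ :=
    Finite.exists_ne_map_eq_of_infinite (fun k : ℕ => Ideal.Quotient.mk J (X ^ k))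
  -- wlog i < j
  wlog hlt : i < j generalizing i j
  · exact this j i hij.symm hmk.symm (by omega)
  have hmem : (X : ℤ[X]) ^ j - X ^ i ∈ J := by
    rw [← Ideal.Quotient.eq_zero_iff_mem, map_sub, sub_eq_zero]
    exact hmk.symm
  rw [hJ, Ideal.mem_span_pair] at hmem
  obtain ⟨w1, w2, hw⟩ := hmem
  -- apply aeval β
  have hkey : β ^ j - β ^ i = aeval β w1 * ((N : ℤ) : R) := by
    have := congrArg (aeval β) hw
    simpa [map_add, map_mul, map_sub, map_pow, Polynomial.aeval_X, Polynomial.aeval_C, hfR]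
      using this.symm
  have hIβ : β ^ j - β ^ i ∈ I := by
    rw [hkey]
    exact Ideal.mul_mem_left _ _ hNI
  set d : ℕ := j - i with hd
  have hd1 : 1 ≤ d := by omega
  -- u^(n*d) - 1 ∈ I
  have hyd : u ^ (n * d) - 1 ∈ I := by
    have hcalc : u ^ (n * d) - 1 = v ^ (n * i) * (β ^ j - β ^ i) := by
      rw [hβ, ← pow_mul, ← pow_mul]
      rw [show j = d + i by omega, Nat.mul_add, pow_add]
      have : v ^ (n*i) * (u ^ (n*d) * u ^ (n*i) - u ^ (n*i))
          = u ^ (n*d) * (v*u) ^ (n*i) - (v*u) ^ (n*i) := by ring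
      rw [this, hvu, one_pow, mul_one]
    rw [hcalc]
    exact Ideal.mul_mem_left _ _ hIβ
  set y : R := u ^ (n * d) with hy
  -- the infinitely many units
  have hinj : Function.Injective (fun m : ℕ => α ^ (d * (m + 1))) := by
    intro m1 m2 heq
    by_contra hne
    wlog hlt2 : m1 < m2 generalizing m1 m2
    · exact this heq.symm (Ne.symm hne) (by omega)
    have heq' : α ^ (d * (m1 + 1)) = α ^ (d * (m2 + 1)) := heq
    have h1 : α ^ (d * (m1+1)) * α ^ (d * (m2+1) - d * (m1+1)) = α ^ (d * (m2+1)) := by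
      rw [← pow_add]
      congr 1
      exact Nat.add_sub_cancel' (Nat.mul_le_mul_left d (Nat.succ_le_succ hlt2.le))
    rw [← heq'] at h1
    conv_rhs at h1 => rw [← mul_one (α ^ (d * (m1+1)))]
    have h2 := mul_left_cancel h1
    have h3 : 1 ≤ d * (m2+1) - d * (m1+1) := by
      have h4 : d * (m1+1) + d ≤ d * (m2+1) := by
        calc d * (m1+1) + d = d * (m1+2) := by ring
          _ ≤ d * (m2+1) := Nat.mul_le_mul_left d (Nat.succ_le_succ hlt2)
      omega
    exact hα _ h3 h2
  apply Set.infinite_of_injective_forall_mem hinj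
  intro m
  show ((α ^ (d * (m + 1)) : Rˣ) : R) ^ n - 1 ∈ I
  have hcoe : ((α ^ (d * (m + 1)) : Rˣ) : R) = u ^ (d * (m + 1)) := by
    rw [hu, Units.val_pow_eq_pow_val]
  rw [hcoe, ← pow_mul]
  have hexp : d * (m + 1) * n = n * d * (m + 1) := by ring
  rw [hexp, pow_mul]
  -- y^(m+1) - 1 ∈ I
  obtain ⟨c, hc⟩ := sub_dvd_pow_sub_pow ((u ^ (n*d))) 1 (m+1)
  rw [one_pow] at hc
  rw [hc]
  exact Ideal.mul_mem_right _ _ hyd
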